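/- Welch bound: Let N ≥ K ≥ 1 and let c_0, …, c_{N−1} be unit-norm vectors in ℂ^K. Then max_{l ≠ k} |⟨c_l, c_k⟩| ≥ sqrt((N−K)/(K(N−1))), where ⟨c_l, c_k⟩ = c_l c_k^H is the Hermitian inner product. -/

import Mathlib

open Complex Finset

/-- Welch bound: if `c_0, …, c_{N-1}` are unit-norm vectors in `ℂ^K` with
`N ≥ K ≥ 1` (and `N ≥ 2` so that a distinct pair exists), then the maximal
cross-correlation amplitude satisfies
`max_{l ≠ k} |⟨c_l, c_k⟩| ≥ sqrt((N - K)/(K(N - 1)))`. -/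
theorem welch_bound (N K : ℕ) (hK : 1 ≤ K) (hKN : K ≤ N) (hN : 2 ≤ N)
    (c : Fin N → EuclideanSpace ℂ (Fin K))
    (hnorm : ∀ l, ‖c l‖ = 1) :
    ∃ l k : Fin N, l ≠ k ∧
      Real.sqrt (((N : ℝ) - K) / (K * ((N : ℝ) - 1)))
        ≤ ‖(inner ℂ (c l) (c k) : ℂ)‖ := by
  classical
  set A : Fin K → Fin K → ℂ := fun i j => ∑ l, (starRingEnd ℂ) (c l i) * c l j with hA
  -- the key Gram identity, complex form
  have key : ∑ l : Fin N, ∑ k : Fin N,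
      (inner ℂ (c l) (c k) : ℂ) * (starRingEnd ℂ) (inner ℂ (c l) (c k) : ℂ)
        = ∑ i : Fin K, ∑ j : Fin K, A i j * (starRingEnd ℂ) (A i j) := by
    simp only [hA, PiLp.inner_apply, RCLike.inner_apply, map_sum, map_mul,
      RingHomCompTriple.comp_apply, Complex.conj_conj, Finset.sum_mul_sum,
      Finset.mul_sum, Finset.sum_mul]
    conv_lhs => enter [2, l]; rw [Finset.sum_comm]
    rw [Finset.sum_comm]
    conv_lhs => enter [2, i, 2, l]; rw [Finset.sum_comm]
    conv_lhs => enter [2, i]; rw [Finset.sum_comm]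
    refine Finset.sum_congr rfl fun i _ => Finset.sum_congr rfl fun j _ =>
      Finset.sum_congr rfl fun l _ => Finset.sum_congr rfl fun m _ => ?_
    ring
  -- real form
  have key' : ∑ l : Fin N, ∑ k : Fin N, ‖(inner ℂ (c l) (c k) : ℂ)‖ ^ 2
      = ∑ i : Fin K, ∑ j : Fin K, ‖A i j‖ ^ 2 := by
    have := key
    simp only [Complex.mul_conj'] at this
    push_cast at this
    exact_mod_cast this
  -- trace of A is N
  have htr : ∑ i : Fin K, A i i = (N : ℂ) := by
    rw [Finset.sum_comm]
    have : ∀ l : Fin N, ∑ i : Fin K, (starRingEnd ℂ) (c l i) * c l i = 1 := by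
      intro l
      have h1 : (inner ℂ (c l) (c l) : ℂ) = ∑ i, (starRingEnd ℂ) (c l i) * c l i := by
        simp only [PiLp.inner_apply, RCLike.inner_apply]
        exact Finset.sum_congr rfl fun i _ => by ring
      rw [← h1, inner_self_eq_norm_sq_to_K, hnorm l]
      norm_num
    simp [this]
  have htrre : ∑ i : Fin K, (A i i).re = (N : ℝ) := by
    have := congrArg Complex.re htr
    simpa [Complex.re_sum] using this
  -- lower bound on the full sum: N^2 ≤ K * S
  have hS : ((N : ℝ)) ^ 2 ≤ (K : ℝ) * ∑ l : Fin N, ∑ k : Fin N, ‖(inner ℂ (c l) (c k) : ℂ)‖ ^ 2 := by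
    rw [key']
    have h1 : ((N : ℝ)) ^ 2 ≤ (K : ℝ) * ∑ i : Fin K, (A i i).re ^ 2 := by
      have := sq_sum_le_card_mul_sum_sq (s := (univ : Finset (Fin K)))
        (f := fun i => (A i i).re)
      rw [htrre] at this
      simpa using this
    refine h1.trans (mul_le_mul_of_nonneg_left ?_ (by positivity))
    calc ∑ i : Fin K, (A i i).re ^ 2 ≤ ∑ i : Fin K, ‖A i i‖ ^ 2 := by
          refine Finset.sum_le_sum fun i _ => ?_
          have h2 : |(A i i).re| ≤ ‖A i i‖ := Complex.abs_re_le_norm _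
          calc (A i i).re ^ 2 = |(A i i).re| ^ 2 := (_root_.sq_abs _).symm
            _ ≤ ‖A i i‖ ^ 2 := by exact pow_le_pow_left₀ (abs_nonneg _) h2 2
      _ ≤ ∑ i : Fin K, ∑ j : Fin K, ‖A i j‖ ^ 2 := by
          refine Finset.sum_le_sum fun i _ => ?_
          exact Finset.single_le_sum (f := fun j => ‖A i j‖ ^ 2) (fun j _ => by positivity) (Finset.mem_univ i)
  -- split S into diagonal and off-diagonal
  set S := ∑ l : Fin N, ∑ k : Fin N, ‖(inner ℂ (c l) (c k) : ℂ)‖ ^ 2 with hSdef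
  have hsplit : S = (N : ℝ) + ∑ p ∈ (univ : Finset (Fin N)).offDiag,
      ‖(inner ℂ (c p.1) (c p.2) : ℂ)‖ ^ 2 := by
    have h0 : S = ∑ p ∈ (univ : Finset (Fin N)) ×ˢ univ,
        ‖(inner ℂ (c p.1) (c p.2) : ℂ)‖ ^ 2 := by
      rw [Finset.sum_product]
    rw [h0, ← Finset.diag_union_offDiag,
      Finset.sum_union (Finset.disjoint_diag_offDiag _), Finset.sum_diag]
    congr 1
    have h1 : ∀ l : Fin N, ‖(inner ℂ (c l) (c l) : ℂ)‖ ^ 2 = 1 := by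
      intro l
      rw [inner_self_eq_norm_sq_to_K, hnorm l]
      norm_num
    rw [Finset.sum_congr rfl fun l _ => h1 l]
    simp
  -- average argument on the off-diagonal
  have hcard : ((univ : Finset (Fin N)).offDiag).card = N * N - N := by
    simp [Finset.offDiag_card]
  have hB : ∑ p ∈ (univ : Finset (Fin N)).offDiag,
      (((N : ℝ) - K) / (K * ((N : ℝ) - 1)))
        ≤ ∑ p ∈ (univ : Finset (Fin N)).offDiag, ‖(inner ℂ (c p.1) (c p.2) : ℂ)‖ ^ 2 := by
    rw [Finset.sum_const, hcard, nsmul_eq_mul]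
    have hNK : (K : ℝ) ≤ N := by exact_mod_cast hKN
    have hK1 : (1 : ℝ) ≤ K := by exact_mod_cast hK
    have hN2 : (2 : ℝ) ≤ N := by exact_mod_cast hN
    have hcast : ((N * N - N : ℕ) : ℝ) = (N : ℝ) * N - N := by
      have : N ≤ N * N := Nat.le_mul_of_pos_left N (by omega)
      push_cast [this]; ring
    rw [hcast]
    have hoff : S - (N : ℝ) = ∑ p ∈ (univ : Finset (Fin N)).offDiag,
        ‖(inner ℂ (c p.1) (c p.2) : ℂ)‖ ^ 2 := by linarith [hsplit]
    rw [← hoff]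
    have hKpos : (0 : ℝ) < K := by linarith
    have hN1pos : (0 : ℝ) < (N : ℝ) - 1 := by linarith
    have heq : ((N : ℝ) * N - N) * (((N : ℝ) - K) / (K * ((N : ℝ) - 1)))
        = (N : ℝ) * ((N : ℝ) - K) / K := by
      field_simp
    rw [heq, div_le_iff₀ hKpos]
    nlinarith [hS]
  -- extract a single pair
  have hne : ((univ : Finset (Fin N)).offDiag).Nonempty := by
    refine ⟨((⟨0, by omega⟩ : Fin N), (⟨1, by omega⟩ : Fin N)),
      Finset.mem_offDiag.2 ⟨mem_univ _, mem_univ _, ?_⟩⟩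
    simp
  obtain ⟨p, hpmem, hp⟩ := Finset.exists_le_of_sum_le hne hB
  obtain ⟨-, -, hpne⟩ := Finset.mem_offDiag.1 hpmem
  refine ⟨p.1, p.2, hpne, ?_⟩
  calc Real.sqrt (((N : ℝ) - K) / (K * ((N : ℝ) - 1)))
      ≤ Real.sqrt (‖(inner ℂ (c p.1) (c p.2) : ℂ)‖ ^ 2) := Real.sqrt_le_sqrt hp
    _ = ‖(inner ℂ (c p.1) (c p.2) : ℂ)‖ := Real.sqrt_sq (norm_nonneg _)
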